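/- Under hypotheses (H1) and (H2), for every P > 0 the limit C(P) = lim_{M→∞} C_M(P) satisfies max( ∫ log(1+P|x|²) dπ_a(x) , ∫ log(1+P|y|²) dπ_b(y) ) ≤ C(P) ≤ ∫∫ log(1+P(|x|²+|y|²)) dπ_a(x) dπ_b(y). -/

import Mathlib

open MeasureTheory ProbabilityTheory Filter Matrix

/-- The `M × (M+1)` two-diagonal channel matrix built from the fading
coefficients `a`, `b` (indexed from `1` as in the paper). -/
def Hmat (M : ℕ) (a b : ℕ → ℂ) : Matrix (Fin M) (Fin (M + 1)) ℂ :=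
  fun i j =>
    if (j : ℕ) = (i : ℕ) then a ((i : ℕ) + 1)
    else if (j : ℕ) = (i : ℕ) + 1 then b ((i : ℕ) + 1) else 0

def trid (d u l : ℕ → ℂ) (M : ℕ) : Matrix (Fin M) (Fin M) ℂ :=
  Matrix.of fun i j =>
    if (i : ℕ) = (j : ℕ) then d (i : ℕ)
    else if (j : ℕ) = (i : ℕ) + 1 then u (i : ℕ)
    else if (i : ℕ) = (j : ℕ) + 1 then l (j : ℕ) else 0

noncomputable def dfun (P : ℝ) (a b : ℕ → ℂ) (i : ℕ) : ℂ :=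
  ((1 : ℝ) + P * Complex.normSq (a (i + 1)) + P * Complex.normSq (b (i + 1)) : ℝ)

noncomputable def ufun (P : ℝ) (a b : ℕ → ℂ) (i : ℕ) : ℂ :=
  (P : ℂ) * b (i + 1) * (starRingEnd ℂ) (a (i + 2))

noncomputable def lfun (P : ℝ) (a b : ℕ → ℂ) (i : ℕ) : ℂ :=
  (P : ℂ) * (starRingEnd ℂ) (b (i + 1)) * a (i + 2)

lemma sum_delta_mul {n : ℕ} (x y : Fin n) (c e : ℂ) :
    ∑ k : Fin n, (if k = x then c else 0) * (if k = y then e else 0)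
      = if x = y then c * e else 0 := by
  rw [Finset.sum_eq_single x]
  · by_cases h : x = y <;> simp [h]
  · intro k _ hk; rw [if_neg hk, zero_mul]
  · intro h; exact absurd (Finset.mem_univ x) h

lemma Hmat_split (M : ℕ) (a b : ℕ → ℂ) (i : Fin M) (k : Fin (M+1)) :
    Hmat M a b i k =
      (if k = (⟨(i : ℕ), by omega⟩ : Fin (M+1)) then a ((i : ℕ) + 1) else 0)
      + (if k = (⟨(i : ℕ) + 1, by omega⟩ : Fin (M+1)) then b ((i : ℕ) + 1) else 0) := by
  simp only [Hmat, Fin.ext_iff]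
  by_cases h1 : (k : ℕ) = (i : ℕ)
  · rw [if_pos h1, if_pos h1, if_neg (by omega), add_zero]
  · rw [if_neg h1, if_neg h1, zero_add]

lemma matrix_eq (P : ℝ) (a b : ℕ → ℂ) (M : ℕ) :
    (1 : Matrix (Fin M) (Fin M) ℂ) + (P : ℂ) • (Hmat M a b * (Hmat M a b)ᴴ)
      = trid (dfun P a b) (ufun P a b) (lfun P a b) M := by
  ext i j
  rw [Matrix.add_apply, Matrix.smul_apply, Matrix.mul_apply]
  have hsum : ∑ k, Hmat M a b i k * (Hmat M a b)ᴴ k j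
      = (if ((i:ℕ) : ℕ) = (j:ℕ) then a ((i:ℕ)+1) * (starRingEnd ℂ) (a ((j:ℕ)+1)) else 0)
        + (if (i:ℕ) = (j:ℕ)+1 then a ((i:ℕ)+1) * (starRingEnd ℂ) (b ((j:ℕ)+1)) else 0)
        + ((if (i:ℕ)+1 = (j:ℕ) then b ((i:ℕ)+1) * (starRingEnd ℂ) (a ((j:ℕ)+1)) else 0)
        + (if (i:ℕ) = (j:ℕ) then b ((i:ℕ)+1) * (starRingEnd ℂ) (b ((j:ℕ)+1)) else 0)) := by
    have : ∀ k, (Hmat M a b)ᴴ k j = (starRingEnd ℂ) (Hmat M a b j k) := fun k => rfl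
    simp only [this]
    calc ∑ k, Hmat M a b i k * (starRingEnd ℂ) (Hmat M a b j k)
        = ∑ k : Fin (M+1),
          ((if k = (⟨(i:ℕ), by omega⟩ : Fin (M+1)) then a ((i:ℕ)+1) else 0)
            + (if k = (⟨(i:ℕ)+1, by omega⟩ : Fin (M+1)) then b ((i:ℕ)+1) else 0))
          * ((if k = (⟨(j:ℕ), by omega⟩ : Fin (M+1)) then (starRingEnd ℂ) (a ((j:ℕ)+1)) else 0)
            + (if k = (⟨(j:ℕ)+1, by omega⟩ : Fin (M+1)) then (starRingEnd ℂ) (b ((j:ℕ)+1)) else 0)) := by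
          refine Finset.sum_congr rfl fun k _ => ?_
          rw [Hmat_split, Hmat_split]
          congr 1
          rw [map_add, apply_ite (starRingEnd ℂ), apply_ite (starRingEnd ℂ), map_zero]
      _ = _ := by
          simp only [add_mul, mul_add, Finset.sum_add_distrib, sum_delta_mul]
          simp only [Fin.ext_iff, Nat.add_right_cancel_iff]
          ring
  rw [hsum]
  simp only [trid, Matrix.of_apply, Matrix.one_apply, dfun, ufun, lfun, Fin.ext_iff]
  rcases Nat.lt_trichotomy (i : ℕ) (j : ℕ) with h | h | h
  · by_cases h2 : (j : ℕ) = (i : ℕ) + 1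
    · rw [if_neg (by omega), if_neg (by omega), if_neg (by omega), if_pos (by omega),
        if_neg (by omega), if_neg (by omega), if_pos (by omega)]
      rw [h2, show (i:ℕ)+1+1 = (i:ℕ)+2 from rfl]
      push_cast [smul_eq_mul]
      ring
    · rw [if_neg (by omega), if_neg (by omega), if_neg (by omega), if_neg (by omega),
        if_neg (by omega), if_neg (by omega), if_neg (by omega), if_neg (by omega)]
      simp
  · rw [if_pos h, if_pos h, if_neg (by omega), if_neg (by omega), if_pos h, if_pos h]
    rw [← h]
    simp only [Complex.mul_conj, smul_eq_mul]
    push_cast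
    ring
  · by_cases h2 : (i : ℕ) = (j : ℕ) + 1
    · rw [if_neg (by omega), if_neg (by omega), if_pos h2, if_neg (by omega), if_neg (by omega),
        if_neg (by omega), if_neg (by omega), if_pos h2]
      rw [h2, show (j:ℕ)+1+1 = (j:ℕ)+2 from rfl]
      push_cast [smul_eq_mul]
      ring
    · rw [if_neg (by omega), if_neg (by omega), if_neg (by omega), if_neg (by omega),
        if_neg (by omega), if_neg (by omega), if_neg (by omega), if_neg (by omega)]
      simp

lemma trid_submatrix (d u l : ℕ → ℂ) (M : ℕ) :
    (trid d u l (M + 1)).submatrix Fin.castSucc Fin.castSucc = trid d u l M := by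
  ext i j; simp [trid]

lemma trid_det_rec (d u l : ℕ → ℂ) (M : ℕ) :
    det (trid d u l (M + 2)) =
      d (M + 1) * det (trid d u l (M + 1)) - u M * l M * det (trid d u l M) := by
  have hmod : M % (M + 2) = M := Nat.mod_eq_of_lt (by omega)
  rw [Matrix.det_succ_row _ (Fin.last (M + 1))]
  rw [Fin.sum_univ_castSucc, Fin.sum_univ_castSucc]
  have hz : ∀ j : Fin M,
      (-1 : ℂ) ^ ((Fin.last (M+1) : ℕ) + ((j.castSucc.castSucc : Fin (M+2)) : ℕ)) *
        trid d u l (M+2) (Fin.last (M+1)) j.castSucc.castSucc *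
        det ((trid d u l (M+2)).submatrix (Fin.last (M+1)).succAbove
          (j.castSucc.castSucc).succAbove) = 0 := by
    intro j
    have hj : (j : ℕ) < M := j.isLt
    have h0 : trid d u l (M+2) (Fin.last (M+1)) j.castSucc.castSucc = 0 := by
      simp only [trid, Matrix.of_apply, Fin.coe_castSucc, Fin.val_last]
      rw [if_neg (by omega), if_neg (by omega), if_neg (by omega)]
    rw [h0]; ring
  rw [Finset.sum_eq_zero (fun j _ => hz j), zero_add]
  -- entries
  have hlastlast : trid d u l (M+2) (Fin.last (M+1)) (Fin.last (M+1)) = d (M+1) := by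
    simp [trid]
  have hlastpen : trid d u l (M+2) (Fin.last (M+1)) ((Fin.last M).castSucc) = l M := by
    simp only [trid, Matrix.of_apply, Fin.coe_castSucc, Fin.val_last]
    rw [if_neg (by omega), if_neg (by omega)]; simp
  -- minor at the (last,last) position
  have hminor2 : (trid d u l (M+2)).submatrix (Fin.last (M+1)).succAbove
      (Fin.last (M+1)).succAbove = trid d u l (M+1) := by
    rw [Fin.succAbove_last, trid_submatrix]
  -- minor at (last, pen) position
  set B := (trid d u l (M+2)).submatrix (Fin.last (M+1)).succAbove
      ((Fin.last M).castSucc).succAbove with hB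
  have hBdet : det B = u M * det (trid d u l M) := by
    rw [Matrix.det_succ_column _ (Fin.last M)]
    rw [Fin.sum_univ_castSucc]
    have hz2 : ∀ i : Fin M,
        (-1 : ℂ) ^ (((i.castSucc : Fin (M+1)) : ℕ) + ((Fin.last M : Fin (M+1)) : ℕ)) *
          B i.castSucc (Fin.last M) *
          det (B.submatrix (i.castSucc).succAbove (Fin.last M).succAbove) = 0 := by
      intro i
      have hi : (i : ℕ) < M := i.isLt
      have h0 : B i.castSucc (Fin.last M) = 0 := by
        rw [hB, Matrix.submatrix_apply, Fin.succAbove_last, Fin.succAbove_castSucc_self]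
        simp only [trid, Matrix.of_apply, Fin.coe_castSucc, Fin.val_succ, Fin.val_last]
        rw [if_neg (by omega), if_neg (by omega), if_neg (by omega)]
      rw [h0]; ring
    rw [Finset.sum_eq_zero (fun i _ => hz2 i), zero_add]
    have hentry : B (Fin.last M) (Fin.last M) = u M := by
      rw [hB, Matrix.submatrix_apply, Fin.succAbove_last, Fin.succAbove_castSucc_self]
      simp only [trid, Matrix.of_apply, Fin.coe_castSucc, Fin.val_succ, Fin.val_last]
      rw [if_neg (by omega)]; simp
    have hminor : B.submatrix (Fin.last M).succAbove (Fin.last M).succAbove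
        = trid d u l M := by
      rw [hB, Fin.succAbove_last, Matrix.submatrix_submatrix]
      ext i j
      have hij : ((Fin.last M).castSucc).succAbove (Fin.castSucc j) = (j.castSucc).castSucc :=
        Fin.succAbove_castSucc_of_lt _ _ (by simp [Fin.lt_def, j.isLt])
      simp only [Matrix.submatrix_apply, Function.comp_apply, hij]
      simp [trid]
    rw [hentry, hminor]
    have : ((Fin.last M : Fin (M+1)) : ℕ) + ((Fin.last M : Fin (M+1)) : ℕ) = 2 * M := by
      simp [Fin.val_last]; ring
    rw [this]
    simp [pow_mul]
  rw [hlastlast, hlastpen, hminor2, hBdet]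
  have he : ((Fin.last (M+1) : Fin (M+2)) : ℕ) + ((Fin.last (M+1) : Fin (M+2)) : ℕ) = 2 * (M+1) := by
    simp [Fin.val_last]; ring
  have ho : ((Fin.last (M+1) : Fin (M+2)) : ℕ) + (((Fin.last M).castSucc : Fin (M+2)) : ℕ) = 2 * M + 1 := by
    simp [Fin.val_last, Fin.coe_castSucc]; ring
  rw [he, ho]
  simp [pow_mul, pow_succ]
  ring

noncomputable def DD (P : ℝ) (a b : ℕ → ℂ) : ℕ → ℝ × ℝ
  | 0 => (1, 1)
  | (M + 1) =>
      ((1 + P * Complex.normSq (b (M + 1))) * (DD P a b M).1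
          + P * Complex.normSq (a (M + 1)) * (DD P a b M).2,
        (DD P a b M).1 + P * Complex.normSq (a (M + 1)) * (DD P a b M).2)

lemma det_trid_eq_DD (P : ℝ) (a b : ℕ → ℂ) : ∀ M : ℕ,
    det (trid (dfun P a b) (ufun P a b) (lfun P a b) M) = ((DD P a b M).1 : ℂ) ∧
    det (trid (dfun P a b) (ufun P a b) (lfun P a b) (M + 1)) = ((DD P a b (M + 1)).1 : ℂ)
  | 0 => by
      constructor
      · simp [DD]
      · rw [show (0 + 1 : ℕ) = 1 from rfl, Matrix.det_fin_one]
        simp only [trid, Matrix.of_apply, Fin.val_zero, if_pos rfl, dfun, DD]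
        push_cast
        ring
  | (M + 1) => by
      refine ⟨(det_trid_eq_DD P a b M).2, ?_⟩
      rw [trid_det_rec]
      rw [(det_trid_eq_DD P a b M).1, (det_trid_eq_DD P a b M).2]
      have hul : ufun P a b M * lfun P a b M
          = ((P ^ 2 * Complex.normSq (b (M + 1)) * Complex.normSq (a (M + 2)) : ℝ) : ℂ) := by
        have : ufun P a b M * lfun P a b M
            = (P : ℂ) ^ 2 * (b (M + 1) * (starRingEnd ℂ) (b (M + 1)))
                * (a (M + 2) * (starRingEnd ℂ) (a (M + 2))) := by
          simp only [ufun, lfun]; ring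
        rw [this, Complex.mul_conj, Complex.mul_conj]
        push_cast
        ring
      rw [hul, dfun]
      show _ = ((DD P a b (M + 1 + 1)).1 : ℂ)
      simp only [DD]
      push_cast
      ring

lemma DD_bounds (P : ℝ) (hP : 0 ≤ P) (a b : ℕ → ℂ) : ∀ M : ℕ,
    1 ≤ (DD P a b M).2 ∧ (DD P a b M).2 ≤ (DD P a b M).1 ∧
    (∏ i ∈ Finset.range M, (1 + P * Complex.normSq (a (i + 1)))) ≤ (DD P a b M).2 ∧
    (∏ i ∈ Finset.range M, (1 + P * Complex.normSq (b (i + 1)))) ≤ (DD P a b M).1 ∧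
    (DD P a b M).1 ≤ ∏ i ∈ Finset.range M,
        (1 + P * Complex.normSq (a (i + 1)) + P * Complex.normSq (b (i + 1)))
  | 0 => by norm_num [DD]
  | (M + 1) => by
      obtain ⟨h1, h2, h3, h4, h5⟩ := DD_bounds P hP a b M
      have hA : 0 ≤ P * Complex.normSq (a (M + 1)) :=
        mul_nonneg hP (Complex.normSq_nonneg _)
      have hB : 0 ≤ P * Complex.normSq (b (M + 1)) :=
        mul_nonneg hP (Complex.normSq_nonneg _)
      have hPa : (0:ℝ) ≤ ∏ i ∈ Finset.range M, (1 + P * Complex.normSq (a (i + 1))) :=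
        Finset.prod_nonneg fun i _ => by nlinarith [Complex.normSq_nonneg (a (i+1)), Complex.normSq_nonneg (b (i+1)), mul_nonneg hP (Complex.normSq_nonneg (a (i+1))), mul_nonneg hP (Complex.normSq_nonneg (b (i+1)))]
      have hPb : (0:ℝ) ≤ ∏ i ∈ Finset.range M, (1 + P * Complex.normSq (b (i + 1))) :=
        Finset.prod_nonneg fun i _ => by nlinarith [Complex.normSq_nonneg (a (i+1)), Complex.normSq_nonneg (b (i+1)), mul_nonneg hP (Complex.normSq_nonneg (a (i+1))), mul_nonneg hP (Complex.normSq_nonneg (b (i+1)))]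
      simp only [DD, Finset.prod_range_succ]
      refine ⟨by nlinarith, by nlinarith, by nlinarith, by nlinarith, by nlinarith⟩
/-- `log det (I + P · H_M H_M*)`, the determinant being real (≥ 1). -/
noncomputable def logdetG (M : ℕ) (P : ℝ) (a b : ℕ → ℂ) : ℝ :=
  Real.log ((Matrix.det (1 + (P : ℂ) • (Hmat M a b * (Hmat M a b)ᴴ))).re)

lemma logdetG_eq (P : ℝ) (a b : ℕ → ℂ) (M : ℕ) :
    logdetG M P a b = Real.log ((DD P a b M).1) := by
  rw [logdetG, matrix_eq P a b M, (det_trid_eq_DD P a b M).1, Complex.ofReal_re]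

lemma logdetG_bounds (P : ℝ) (hP : 0 ≤ P) (a b : ℕ → ℂ) (M : ℕ) :
    (∑ i ∈ Finset.range M, Real.log (1 + P * Complex.normSq (a (i + 1))))
        ≤ logdetG M P a b ∧
    (∑ i ∈ Finset.range M, Real.log (1 + P * Complex.normSq (b (i + 1))))
        ≤ logdetG M P a b ∧
    logdetG M P a b ≤ ∑ i ∈ Finset.range M,
        Real.log (1 + P * (Complex.normSq (a (i + 1)) + Complex.normSq (b (i + 1)))) := by
  obtain ⟨h1, h2, h3, h4, h5⟩ := DD_bounds P hP a b M
  have posa : ∀ i : ℕ, (0:ℝ) < 1 + P * Complex.normSq (a (i + 1)) := fun i => by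
    nlinarith [mul_nonneg hP (Complex.normSq_nonneg (a (i+1)))]
  have posb : ∀ i : ℕ, (0:ℝ) < 1 + P * Complex.normSq (b (i + 1)) := fun i => by
    nlinarith [mul_nonneg hP (Complex.normSq_nonneg (b (i+1)))]
  have posab : ∀ i : ℕ, (0:ℝ) < 1 + P * Complex.normSq (a (i + 1)) + P * Complex.normSq (b (i + 1)) := fun i => by
    nlinarith [mul_nonneg hP (Complex.normSq_nonneg (a (i+1))),
      mul_nonneg hP (Complex.normSq_nonneg (b (i+1)))]
  have hprodpos_a : (0:ℝ) < ∏ i ∈ Finset.range M, (1 + P * Complex.normSq (a (i + 1))) :=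
    Finset.prod_pos fun i _ => posa i
  have hprodpos_b : (0:ℝ) < ∏ i ∈ Finset.range M, (1 + P * Complex.normSq (b (i + 1))) :=
    Finset.prod_pos fun i _ => posb i
  have hprodpos_ab : (0:ℝ) < ∏ i ∈ Finset.range M,
      (1 + P * Complex.normSq (a (i + 1)) + P * Complex.normSq (b (i + 1))) :=
    Finset.prod_pos fun i _ => posab i
  have hD1pos : (0:ℝ) < (DD P a b M).1 := by nlinarith
  rw [logdetG_eq]
  refine ⟨?_, ?_, ?_⟩
  · rw [← Real.log_prod (fun i _ => (posa i).ne')]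
    exact (Real.log_le_log_iff hprodpos_a hD1pos).mpr (le_trans h3 h2)
  · rw [← Real.log_prod (fun i _ => (posb i).ne')]
    exact (Real.log_le_log_iff hprodpos_b hD1pos).mpr h4
  · have : ∀ i : ℕ, 1 + P * (Complex.normSq (a (i + 1)) + Complex.normSq (b (i + 1)))
        = 1 + P * Complex.normSq (a (i + 1)) + P * Complex.normSq (b (i + 1)) := fun i => by ring
    simp only [this]
    rw [← Real.log_prod (fun i _ => (posab i).ne')]
    exact (Real.log_le_log_iff hD1pos hprodpos_ab).mpr h5

lemma measurable_DD {Ω : Type*} [MeasurableSpace Ω] (P : ℝ) (a b : ℕ → Ω → ℂ)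
    (ha : ∀ n, Measurable (a n)) (hb : ∀ n, Measurable (b n)) : ∀ M : ℕ,
    Measurable (fun ω => (DD P (fun n => a n ω) (fun n => b n ω) M).1) ∧
    Measurable (fun ω => (DD P (fun n => a n ω) (fun n => b n ω) M).2)
  | 0 => ⟨measurable_const, measurable_const⟩
  | (M + 1) => by
      obtain ⟨h1, h2⟩ := measurable_DD P a b ha hb M
      have hna : Measurable fun ω => Complex.normSq (a (M + 1) ω) :=
        Complex.continuous_normSq.measurable.comp (ha (M + 1))
      have hnb : Measurable fun ω => Complex.normSq (b (M + 1) ω) :=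
        Complex.continuous_normSq.measurable.comp (hb (M + 1))
      refine ⟨?_, ?_⟩
      · simp only [DD]
        exact ((measurable_const.add (hnb.const_mul P)).mul h1).add
          ((hna.const_mul P).mul h2)
      · simp only [DD]
        exact h1.add ((hna.const_mul P).mul h2)
lemma measurable_glog (P : ℝ) : Measurable fun x : ℂ => Real.log (1 + P * ‖x‖ ^ 2) :=
  Real.measurable_log.comp
    (measurable_const.add ((continuous_norm.measurable.pow_const 2).const_mul P))

lemma measurable_hlog (P : ℝ) :
    Measurable fun p : ℂ × ℂ => Real.log (1 + P * (‖p.1‖ ^ 2 + ‖p.2‖ ^ 2)) :=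
  Real.measurable_log.comp (measurable_const.add
    ((((continuous_norm.measurable.comp measurable_fst).pow_const 2).add
      ((continuous_norm.measurable.comp measurable_snd).pow_const 2)).const_mul P))

lemma integrable_log_one_add (P : ℝ) (hP : 0 < P) (π : Measure ℂ) [IsProbabilityMeasure π]
    (H1 : Integrable (fun x : ℂ => (Real.log (‖x‖)) ^ 2) π) :
    Integrable (fun x : ℂ => Real.log (1 + P * ‖x‖ ^ 2)) π := by
  refine Integrable.mono' ((integrable_const (Real.log (1 + P) + 1)).add H1)
    (measurable_glog P).aestronglyMeasurable ?_
  filter_upwards with x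
  have habs0 : (0:ℝ) ≤ ‖x‖ := norm_nonneg x
  have h0 : (0:ℝ) ≤ Real.log (1 + P * ‖x‖ ^ 2) :=
    Real.log_nonneg (by nlinarith [sq_nonneg (‖x‖)])
  rw [Real.norm_eq_abs, abs_of_nonneg h0]
  rcases le_or_gt (‖x‖) 1 with hx | hx
  · have hle : 1 + P * ‖x‖ ^ 2 ≤ 1 + P := by
      nlinarith [mul_nonneg (sub_nonneg.2 hx) habs0]
    have := (Real.log_le_log_iff (by nlinarith [sq_nonneg (‖x‖)]) (by nlinarith)).mpr hle
    simp only [Pi.add_apply]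
    nlinarith [sq_nonneg (Real.log (‖x‖))]
  · have habs : (0:ℝ) < ‖x‖ := lt_trans one_pos hx
    have h1 : 1 + P * ‖x‖ ^ 2 ≤ (1 + P) * ‖x‖ ^ 2 := by nlinarith
    have h2 : Real.log ((1 + P) * ‖x‖ ^ 2)
        = Real.log (1 + P) + 2 * Real.log (‖x‖) := by
      rw [Real.log_mul (by nlinarith) (by positivity), Real.log_pow]
      push_cast; ring
    have h3 := (Real.log_le_log_iff (by nlinarith [sq_nonneg (‖x‖)])
      (by nlinarith [sq_nonneg (‖x‖)])).mpr h1
    simp only [Pi.add_apply]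
    nlinarith [sq_nonneg (Real.log (‖x‖) - 1)]

lemma integrable_log_pair (P : ℝ) (hP : 0 < P) (πa πb : Measure ℂ)
    [IsProbabilityMeasure πa] [IsProbabilityMeasure πb]
    (Ia : Integrable (fun x : ℂ => Real.log (1 + P * ‖x‖ ^ 2)) πa)
    (Ib : Integrable (fun x : ℂ => Real.log (1 + P * ‖x‖ ^ 2)) πb) :
    Integrable (fun p : ℂ × ℂ =>
      Real.log (1 + P * (‖p.1‖ ^ 2 + ‖p.2‖ ^ 2))) (πa.prod πb) := by
  have hfst : Integrable (fun p : ℂ × ℂ => Real.log (1 + P * ‖p.1‖ ^ 2)) (πa.prod πb) := by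
    have hmap : Measure.map Prod.fst (πa.prod πb) = πa := Measure.fst_prod
    have : Integrable (fun x : ℂ => Real.log (1 + P * ‖x‖ ^ 2))
        (Measure.map Prod.fst (πa.prod πb)) := by rw [hmap]; exact Ia
    exact (integrable_map_measure (measurable_glog P).aestronglyMeasurable
      measurable_fst.aemeasurable).mp this
  have hsnd : Integrable (fun p : ℂ × ℂ => Real.log (1 + P * ‖p.2‖ ^ 2)) (πa.prod πb) := by
    have hmap : Measure.map Prod.snd (πa.prod πb) = πb := Measure.snd_prod
    have : Integrable (fun x : ℂ => Real.log (1 + P * ‖x‖ ^ 2))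
        (Measure.map Prod.snd (πa.prod πb)) := by rw [hmap]; exact Ib
    exact (integrable_map_measure (measurable_glog P).aestronglyMeasurable
      measurable_snd.aemeasurable).mp this
  refine Integrable.mono' (hfst.add hsnd) (measurable_hlog P).aestronglyMeasurable ?_
  filter_upwards with p
  have h1 : (0:ℝ) ≤ ‖p.1‖ ^ 2 := sq_nonneg _
  have h2 : (0:ℝ) ≤ ‖p.2‖ ^ 2 := sq_nonneg _
  have hnn : (0:ℝ) ≤ Real.log (1 + P * (‖p.1‖ ^ 2 + ‖p.2‖ ^ 2)) :=
    Real.log_nonneg (by nlinarith)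
  rw [Real.norm_eq_abs, abs_of_nonneg hnn]
  have hle : 1 + P * (‖p.1‖ ^ 2 + ‖p.2‖ ^ 2)
      ≤ (1 + P * ‖p.1‖ ^ 2) * (1 + P * ‖p.2‖ ^ 2) := by
    nlinarith [mul_nonneg (mul_nonneg (mul_nonneg hP.le h1) hP.le) h2]
  have := (Real.log_le_log_iff (by nlinarith) (by nlinarith)).mpr hle
  rw [Real.log_mul (by nlinarith) (by nlinarith)] at this
  simpa using this
theorem statement1
    {Ω : Type*} [MeasureSpace Ω] [IsProbabilityMeasure (ℙ : Measure Ω)]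
    (πa πb : Measure ℂ) [IsProbabilityMeasure πa] [IsProbabilityMeasure πb]
    (a b : ℕ → Ω → ℂ)
    (ha_meas : ∀ n, Measurable (a n)) (hb_meas : ∀ n, Measurable (b n))
    (ha_law : ∀ n, Measure.map (a n) ℙ = πa)
    (hb_law : ∀ n, Measure.map (b n) ℙ = πb)
    (h_indep : iIndepFun (Sum.elim a b) ℙ)
    -- (H1)
    (H1a : Integrable (fun x : ℂ => (Real.log (‖x‖)) ^ 2) πa)
    (H1b : Integrable (fun x : ℂ => (Real.log (‖x‖)) ^ 2) πb)
    -- (H2)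
    (H2a : πa ≪ (volume : Measure ℂ)) (H2b : πb ≪ (volume : Measure ℂ))
    (P : ℝ) (hP : 0 < P)
    (C : ℝ)
    (hC : Tendsto
      (fun M : ℕ =>
        (1 / (M : ℝ)) *
          ∫ ω, logdetG M P (fun n => a n ω) (fun n => b n ω) ∂ℙ)
      atTop (nhds C)) :
    max (∫ x, Real.log (1 + P * ‖x‖ ^ 2) ∂πa)
        (∫ y, Real.log (1 + P * ‖y‖ ^ 2) ∂πb) ≤ C ∧
    C ≤ ∫ p : ℂ × ℂ,
          Real.log (1 + P * (‖p.1‖ ^ 2 + ‖p.2‖ ^ 2))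
          ∂(πa.prod πb) := by
  have hg_int_a : Integrable (fun x : ℂ => Real.log (1 + P * ‖x‖ ^ 2)) πa :=
    integrable_log_one_add P hP πa H1a
  have hg_int_b : Integrable (fun x : ℂ => Real.log (1 + P * ‖x‖ ^ 2)) πb :=
    integrable_log_one_add P hP πb H1b
  have hh_int := integrable_log_pair P hP πa πb hg_int_a hg_int_b
  set Ia := ∫ x, Real.log (1 + P * ‖x‖ ^ 2) ∂πa with hIa
  set Ib := ∫ y, Real.log (1 + P * ‖y‖ ^ 2) ∂πb with hIb
  set Iab := ∫ p : ℂ × ℂ,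
      Real.log (1 + P * (‖p.1‖ ^ 2 + ‖p.2‖ ^ 2)) ∂(πa.prod πb) with hIab
  have hmap_pair : ∀ n : ℕ, Measure.map (fun ω => (a n ω, b n ω)) ℙ = πa.prod πb := by
    intro n
    have hi : IndepFun (a n) (b n) ℙ :=
      h_indep.indepFun (show (Sum.inl n : ℕ ⊕ ℕ) ≠ Sum.inr n by simp)
    rw [← ha_law n, ← hb_law n]
    exact (indepFun_iff_map_prod_eq_prod_map_map (ha_meas n).aemeasurable
      (hb_meas n).aemeasurable).mp hi
  have hga_int : ∀ n, Integrable (fun ω => Real.log (1 + P * ‖a n ω‖ ^ 2)) ℙ := by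
    intro n
    have h1 : Integrable (fun x : ℂ => Real.log (1 + P * ‖x‖ ^ 2))
        (Measure.map (a n) ℙ) := by rw [ha_law n]; exact hg_int_a
    simpa [Function.comp_def] using (integrable_map_measure (measurable_glog P).aestronglyMeasurable
      (ha_meas n).aemeasurable).mp h1
  have hgb_int : ∀ n, Integrable (fun ω => Real.log (1 + P * ‖b n ω‖ ^ 2)) ℙ := by
    intro n
    have h1 : Integrable (fun x : ℂ => Real.log (1 + P * ‖x‖ ^ 2))
        (Measure.map (b n) ℙ) := by rw [hb_law n]; exact hg_int_b
    simpa [Function.comp_def] using (integrable_map_measure (measurable_glog P).aestronglyMeasurable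
      (hb_meas n).aemeasurable).mp h1
  have hpair_int : ∀ n, Integrable
      (fun ω => Real.log (1 + P * (‖a n ω‖ ^ 2 + ‖b n ω‖ ^ 2))) ℙ := by
    intro n
    have h1 : Integrable (fun p : ℂ × ℂ =>
        Real.log (1 + P * (‖p.1‖ ^ 2 + ‖p.2‖ ^ 2)))
        (Measure.map (fun ω => (a n ω, b n ω)) ℙ) := by rw [hmap_pair n]; exact hh_int
    simpa [Function.comp_def] using (integrable_map_measure (measurable_hlog P).aestronglyMeasurable
      ((ha_meas n).prodMk (hb_meas n)).aemeasurable).mp h1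
  have hga_eq : ∀ n, ∫ ω, Real.log (1 + P * ‖a n ω‖ ^ 2) ∂ℙ = Ia := by
    intro n
    rw [hIa, ← ha_law n,
      integral_map (ha_meas n).aemeasurable (measurable_glog P).aestronglyMeasurable]
  have hgb_eq : ∀ n, ∫ ω, Real.log (1 + P * ‖b n ω‖ ^ 2) ∂ℙ = Ib := by
    intro n
    rw [hIb, ← hb_law n,
      integral_map (hb_meas n).aemeasurable (measurable_glog P).aestronglyMeasurable]
  have hpair_eq : ∀ n,
      ∫ ω, Real.log (1 + P * (‖a n ω‖ ^ 2 + ‖b n ω‖ ^ 2)) ∂ℙ = Iab := by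
    intro n
    rw [hIab, ← hmap_pair n,
      integral_map ((ha_meas n).prodMk (hb_meas n)).aemeasurable
        (measurable_hlog P).aestronglyMeasurable]
  have key : ∀ M : ℕ, 1 ≤ M →
      (Ia ≤ (1 / (M : ℝ)) * ∫ ω, logdetG M P (fun n => a n ω) (fun n => b n ω) ∂ℙ ∧
       Ib ≤ (1 / (M : ℝ)) * ∫ ω, logdetG M P (fun n => a n ω) (fun n => b n ω) ∂ℙ) ∧
      (1 / (M : ℝ)) * (∫ ω, logdetG M P (fun n => a n ω) (fun n => b n ω) ∂ℙ) ≤ Iab := by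
    intro M hM
    have hMpos : (0:ℝ) < M := by exact_mod_cast Nat.lt_of_lt_of_le Nat.zero_lt_one hM
    set S := fun ω => logdetG M P (fun n => a n ω) (fun n => b n ω) with hSdef
    have hSmeas : Measurable S := by
      have hfe : S = fun ω => Real.log ((DD P (fun n => a n ω) (fun n => b n ω) M).1) := by
        funext ω; rw [hSdef]; exact logdetG_eq P _ _ M
      rw [hfe]
      exact Real.measurable_log.comp (measurable_DD P a b ha_meas hb_meas M).1
    have hlow_a : ∀ ω,
        (∑ i ∈ Finset.range M, Real.log (1 + P * ‖a (i + 1) ω‖ ^ 2)) ≤ S ω := by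
      intro ω
      have := (logdetG_bounds P hP.le (fun n => a n ω) (fun n => b n ω) M).1
      simpa [Complex.sq_norm] using this
    have hlow_b : ∀ ω,
        (∑ i ∈ Finset.range M, Real.log (1 + P * ‖b (i + 1) ω‖ ^ 2)) ≤ S ω := by
      intro ω
      have := (logdetG_bounds P hP.le (fun n => a n ω) (fun n => b n ω) M).2.1
      simpa [Complex.sq_norm] using this
    have hup : ∀ ω, S ω ≤ ∑ i ∈ Finset.range M,
        Real.log (1 + P * (‖a (i + 1) ω‖ ^ 2 + ‖b (i + 1) ω‖ ^ 2)) := by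
      intro ω
      have := (logdetG_bounds P hP.le (fun n => a n ω) (fun n => b n ω) M).2.2
      simpa [Complex.sq_norm] using this
    have hup_int : Integrable (fun ω => ∑ i ∈ Finset.range M,
        Real.log (1 + P * (‖a (i + 1) ω‖ ^ 2 + ‖b (i + 1) ω‖ ^ 2))) ℙ :=
      integrable_finset_sum _ (fun i _ => hpair_int (i + 1))
    have hS_nonneg : ∀ ω, 0 ≤ S ω := by
      intro ω
      obtain ⟨u1, u2, _⟩ := DD_bounds P hP.le (fun n => a n ω) (fun n => b n ω) M
      have hSe : S ω = Real.log ((DD P (fun n => a n ω) (fun n => b n ω) M).1) :=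
        logdetG_eq P _ _ M
      rw [hSe]
      exact Real.log_nonneg (le_trans u1 u2)
    have hS_int : Integrable S ℙ := by
      refine Integrable.mono' hup_int hSmeas.aestronglyMeasurable (ae_of_all _ fun ω => ?_)
      rw [Real.norm_eq_abs, abs_of_nonneg (hS_nonneg ω)]
      exact hup ω
    have hint_low_a : ∫ ω, (∑ i ∈ Finset.range M,
        Real.log (1 + P * ‖a (i + 1) ω‖ ^ 2)) ∂ℙ = M * Ia := by
      rw [integral_finset_sum _ (fun i _ => hga_int (i + 1))]
      simp only [hga_eq]
      rw [Finset.sum_const, Finset.card_range, nsmul_eq_mul]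
    have hint_low_b : ∫ ω, (∑ i ∈ Finset.range M,
        Real.log (1 + P * ‖b (i + 1) ω‖ ^ 2)) ∂ℙ = M * Ib := by
      rw [integral_finset_sum _ (fun i _ => hgb_int (i + 1))]
      simp only [hgb_eq]
      rw [Finset.sum_const, Finset.card_range, nsmul_eq_mul]
    have hint_up : ∫ ω, (∑ i ∈ Finset.range M,
        Real.log (1 + P * (‖a (i + 1) ω‖ ^ 2 + ‖b (i + 1) ω‖ ^ 2))) ∂ℙ
          = M * Iab := by
      rw [integral_finset_sum _ (fun i _ => hpair_int (i + 1))]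
      simp only [hpair_eq]
      rw [Finset.sum_const, Finset.card_range, nsmul_eq_mul]
    have hSla : (M : ℝ) * Ia ≤ ∫ ω, S ω ∂ℙ := by
      rw [← hint_low_a]
      exact integral_mono (integrable_finset_sum _ (fun i _ => hga_int (i + 1))) hS_int hlow_a
    have hSlb : (M : ℝ) * Ib ≤ ∫ ω, S ω ∂ℙ := by
      rw [← hint_low_b]
      exact integral_mono (integrable_finset_sum _ (fun i _ => hgb_int (i + 1))) hS_int hlow_b
    have hSu : ∫ ω, S ω ∂ℙ ≤ (M : ℝ) * Iab := by
      rw [← hint_up]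
      exact integral_mono hS_int hup_int hup
    have hinv : (0:ℝ) < 1 / (M : ℝ) := by positivity
    refine ⟨⟨?_, ?_⟩, ?_⟩
    · have := mul_le_mul_of_nonneg_left hSla hinv.le
      calc Ia = (1 / (M:ℝ)) * ((M:ℝ) * Ia) := by field_simp
        _ ≤ _ := this
    · have := mul_le_mul_of_nonneg_left hSlb hinv.le
      calc Ib = (1 / (M:ℝ)) * ((M:ℝ) * Ib) := by field_simp
        _ ≤ _ := this
    · have := mul_le_mul_of_nonneg_left hSu hinv.le
      calc (1 / (M:ℝ)) * ∫ ω, S ω ∂ℙ ≤ (1 / (M:ℝ)) * ((M:ℝ) * Iab) := this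
        _ = Iab := by field_simp
  constructor
  · refine max_le ?_ ?_
    · exact ge_of_tendsto hC (Filter.eventually_atTop.2 ⟨1, fun M hM => ((key M hM).1).1⟩)
    · exact ge_of_tendsto hC (Filter.eventually_atTop.2 ⟨1, fun M hM => ((key M hM).1).2⟩)
  · exact le_of_tendsto hC (Filter.eventually_atTop.2 ⟨1, fun M hM => (key M hM).2⟩)
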